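/- Let a₁, a₂, a₃ be distinct nonzero points of 𝔻 with a₁ + \bar{a₁}a₂a₃ = a₂ + a₃, let B(z) = z ∏_{i=1}^{3}(z-a_i)/(1-\bar{a_i}z), and let M(z) = -(z-a₁)/(1-\bar{a₁}z). Then B ∘ M = B if and only if a₃ = (a₁ - a₂)/(1 - \bar{a₁}a₂). -/

import Mathlib

open Complex

lemma one_sub_ne (a b : ℂ) (ha : ‖a‖ < 1) (hb : ‖b‖ < 1) :
    1 - a * b ≠ 0 := by
  intro h
  have : a * b = 1 := by linear_combination -h
  have := congrArg (‖·‖) this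
  rw [norm_mul, norm_one] at this
  nlinarith [norm_nonneg a, norm_nonneg b]

lemma disc_lemma (a z : ℂ) (ha : ‖a‖ < 1) (hz : ‖z‖ < 1) :
    ‖(z - a) / (1 - (starRingEnd ℂ) a * z)‖ < 1 := by
  have hd : 1 - (starRingEnd ℂ) a * z ≠ 0 := by
    apply one_sub_ne
    · simpa using ha
    · exact hz
  rw [norm_div, div_lt_one (norm_pos_iff.mpr hd)]
  have h1 : Complex.normSq (z - a) < Complex.normSq (1 - (starRingEnd ℂ) a * z) := by
    have ha2 : Complex.normSq a < 1 := by
      rw [← Complex.sq_norm]; nlinarith [norm_nonneg a]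
    have hz2 : Complex.normSq z < 1 := by
      rw [← Complex.sq_norm]; nlinarith [norm_nonneg z]
    simp only [Complex.normSq_apply, Complex.sub_re, Complex.sub_im, Complex.one_re,
      Complex.one_im, Complex.mul_re, Complex.mul_im, Complex.conj_re, Complex.conj_im]
    simp only [Complex.normSq_apply] at ha2 hz2
    nlinarith [sq_nonneg (a.re - z.re), sq_nonneg (a.im - z.im)]
  have := Complex.sq_norm (z - a)
  have := Complex.sq_norm (1 - (starRingEnd ℂ) a * z)
  nlinarith [norm_nonneg (z - a), norm_nonneg (1 - (starRingEnd ℂ) a * z)]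

set_option maxHeartbeats 1000000 in
lemma key_identity (a1 a2 a3 c1 c2 c3 z w : ℂ)
    (ha3 : a3 * (1 - c1*a2) = a1 - a2)
    (hc3 : c3 * (1 - a1*c2) = c1 - c2)
    (hw : w = -((z - a1)/(1 - c1*z)))
    (d1 : 1 - c1*z ≠ 0) (d2 : 1 - c2*z ≠ 0) (d3 : 1 - c3*z ≠ 0)
    (f1 : 1 - c1*a2 ≠ 0) (f2 : 1 - a1*c2 ≠ 0)
    (g1 : 1 - c1*a1 ≠ 0) :
    w * ((w - a1)/(1 - c1*w)) * ((w - a2)/(1 - c2*w)) * ((w - a3)/(1 - c3*w))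
    = z * ((z - a1)/(1 - c1*z)) * ((z - a2)/(1 - c2*z)) * ((z - a3)/(1 - c3*z)) := by
  have d1' : 1 - z*c1 ≠ 0 := by rwa [mul_comm]
  have hnum1 : w - a1 = -z*(1-c1*a1)/(1-c1*z) := by
    rw [hw]; field_simp; ring
  have hden1 : 1 - c1*w = (1-c1*a1)/(1-c1*z) := by
    rw [hw]; field_simp; ring
  have hnum2 : w - a2 = (1-c1*a2)*(a3-z)/(1-c1*z) := by
    rw [hw]; field_simp; linear_combination -ha3
  have hden2 : 1 - c2*w = (1-a1*c2)*(1-c3*z)/(1-c1*z) := by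
    rw [hw]; field_simp; linear_combination z * hc3
  have hnum3 : w - a3 = (1-c1*a1)*(a2-z)/((1-c1*a2)*(1-c1*z)) := by
    rw [hw]; field_simp; linear_combination (-(1 - c1*z)) * ha3
  have hden3 : 1 - c3*w = (1-c1*a1)*(1-c2*z)/((1-a1*c2)*(1-c1*z)) := by
    rw [hw]; field_simp; linear_combination (z - a1) * hc3
  have hw' : w = (a1 - z)/(1-c1*z) := by rw [hw]; field_simp; ring
  have F1 : (w - a1)/(1 - c1*w) = -z := by
    rw [hnum1, hden1]; field_simp
  have F2 : (w - a2)/(1 - c2*w) = ((1-c1*a2)*(a3-z)) / ((1-a1*c2)*(1-c3*z)) := by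
    rw [hnum2, hden2]; field_simp
  have F3 : (w - a3)/(1 - c3*w) = ((1-a1*c2)*(a2-z)) / ((1-c1*a2)*(1-c2*z)) := by
    rw [hnum3, hden3]
    field_simp
  rw [F1, F2, F3, hw']
  field_simp
  ring

/-- For the degree-4 Blaschke product with zeros `0, a₁, a₂, a₃` satisfying
`a₁ + conj a₁ · a₂ a₃ = a₂ + a₃` and `M z = -(z - a₁)/(1 - conj a₁ z)`, we have
`B ∘ M = B` iff `a₃ = (a₁ - a₂)/(1 - conj a₁ · a₂)`. -/
theorem degree_four_invariance_iff (a₁ a₂ a₃ : ℂ)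
    (h₁ : ‖a₁‖ < 1) (h₂ : ‖a₂‖ < 1) (h₃ : ‖a₃‖ < 1)
    (h₁0 : a₁ ≠ 0) (h₂0 : a₂ ≠ 0) (h₃0 : a₃ ≠ 0)
    (h12 : a₁ ≠ a₂) (h13 : a₁ ≠ a₃) (h23 : a₂ ≠ a₃)
    (hcond : a₁ + (starRingEnd ℂ) a₁ * a₂ * a₃ = a₂ + a₃)
    (B : ℂ → ℂ)
    (hB : ∀ z, B z = z * ((z - a₁) / (1 - (starRingEnd ℂ) a₁ * z)) *
      ((z - a₂) / (1 - (starRingEnd ℂ) a₂ * z)) *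
      ((z - a₃) / (1 - (starRingEnd ℂ) a₃ * z)))
    (M : ℂ → ℂ)
    (hM : ∀ z, M z = -((z - a₁) / (1 - (starRingEnd ℂ) a₁ * z))) :
    (∀ z ∈ Metric.ball (0 : ℂ) 1, B (M z) = B z) ↔
      a₃ = (a₁ - a₂) / (1 - (starRingEnd ℂ) a₁ * a₂) := by
  set c₁ := (starRingEnd ℂ) a₁ with hc₁
  set c₂ := (starRingEnd ℂ) a₂ with hc₂
  set c₃ := (starRingEnd ℂ) a₃ with hc₃
  have hc₁abs : ‖c₁‖ < 1 := by rw [hc₁]; simpa using h₁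
  have hc₂abs : ‖c₂‖ < 1 := by rw [hc₂]; simpa using h₂
  have hc₃abs : ‖c₃‖ < 1 := by rw [hc₃]; simpa using h₃
  have f1 : 1 - c₁ * a₂ ≠ 0 := one_sub_ne _ _ hc₁abs h₂
  have f2 : 1 - a₁ * c₂ ≠ 0 := one_sub_ne _ _ h₁ hc₂abs
  have g1 : 1 - c₁ * a₁ ≠ 0 := one_sub_ne _ _ hc₁abs h₁
  have hMabs : ∀ z : ℂ, ‖z‖ < 1 → ‖M z‖ < 1 := by
    intro z hz
    rw [hM z, norm_neg]
    exact disc_lemma a₁ z h₁ hz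
  have hzero : ∀ w : ℂ, ‖w‖ < 1 → B w = 0 →
      w = 0 ∨ w = a₁ ∨ w = a₂ ∨ w = a₃ := by
    intro w hw hBw
    rw [hB w] at hBw
    have d1 : 1 - c₁ * w ≠ 0 := one_sub_ne _ _ hc₁abs hw
    have d2 : 1 - c₂ * w ≠ 0 := one_sub_ne _ _ hc₂abs hw
    have d3 : 1 - c₃ * w ≠ 0 := one_sub_ne _ _ hc₃abs hw
    rcases mul_eq_zero.mp hBw with h | h
    · rcases mul_eq_zero.mp h with h | h
      · rcases mul_eq_zero.mp h with h | h
        · exact Or.inl h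
        · rcases div_eq_zero_iff.mp h with h | h
          · exact Or.inr (Or.inl (sub_eq_zero.mp h))
          · exact absurd h d1
      · rcases div_eq_zero_iff.mp h with h | h
        · exact Or.inr (Or.inr (Or.inl (sub_eq_zero.mp h)))
        · exact absurd h d2
    · rcases div_eq_zero_iff.mp h with h | h
      · exact Or.inr (Or.inr (Or.inr (sub_eq_zero.mp h)))
      · exact absurd h d3
  have hmem : ∀ z : ℂ, ‖z‖ < 1 → z ∈ Metric.ball (0 : ℂ) 1 := by
    intro z hz
    simpa [Metric.mem_ball, Complex.dist_eq] using hz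
  constructor
  · intro hinv
    -- B (M a₂) = 0
    have hBa₂ : B a₂ = 0 := by rw [hB a₂, sub_self]; simp
    have hBa₃ : B a₃ = 0 := by rw [hB a₃, sub_self a₃]; simp
    have hM₂0 : B (M a₂) = 0 := by rw [hinv a₂ (hmem a₂ h₂)]; exact hBa₂
    have hM₃0 : B (M a₃) = 0 := by rw [hinv a₃ (hmem a₃ h₃)]; exact hBa₃
    have hcases₂ := hzero (M a₂) (hMabs a₂ h₂) hM₂0
    have hMa₂ : M a₂ = -((a₂ - a₁) / (1 - c₁ * a₂)) := hM a₂
    have hMa₃ : M a₃ = -((a₃ - a₁) / (1 - c₁ * a₃)) := hM a₃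
    have f1' : 1 - c₁ * a₃ ≠ 0 := one_sub_ne _ _ hc₁abs h₃
    have f1c : 1 - a₂ * c₁ ≠ 0 := by rwa [mul_comm]
    have f1c' : 1 - a₃ * c₁ ≠ 0 := by rwa [mul_comm]
    rcases hcases₂ with h | h | h | h
    · -- M a₂ = 0 ⟹ a₂ = a₁, contradiction
      exfalso
      rw [hMa₂] at h
      have : a₂ - a₁ = 0 := by
        field_simp at h
        linear_combination -h
      exact h12 (by linear_combination -this)
    · -- M a₂ = a₁ ⟹ a₂ = 0, contradiction
      exfalso
      rw [hMa₂] at h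
      have h' : -(a₂ - a₁) = a₁ * (1 - c₁ * a₂) := by
        field_simp at h
        linear_combination h
      have hne : 1 - a₁ * c₁ ≠ 0 := one_sub_ne _ _ h₁ hc₁abs
      have : a₂ * (1 - a₁ * c₁) = 0 := by linear_combination -h'
      exact h₂0 ((mul_eq_zero.mp this).resolve_right hne)
    · -- M a₂ = a₂ : fixed point case
      exfalso
      rw [hMa₂] at h
      have E2 : c₁ * a₂^2 - 2*a₂ + a₁ = 0 := by
        field_simp at h
        linear_combination h
      -- consider M a₃
      rcases hzero (M a₃) (hMabs a₃ h₃) hM₃0 with h' | h' | h' | h'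
      · rw [hMa₃] at h'
        have : a₃ - a₁ = 0 := by
          field_simp at h'
          linear_combination -h'
        exact h13 (by linear_combination -this)
      · rw [hMa₃] at h'
        have h'' : -(a₃ - a₁) = a₁ * (1 - c₁ * a₃) := by
          field_simp at h'
          linear_combination h'
        have hne : 1 - a₁ * c₁ ≠ 0 := one_sub_ne _ _ h₁ hc₁abs
        have : a₃ * (1 - a₁ * c₁) = 0 := by linear_combination -h''
        exact h₃0 ((mul_eq_zero.mp this).resolve_right hne)
      · -- M a₃ = a₂ : then a₂ = a₃ by injectivity
        rw [hMa₃] at h'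
        have h'' : -(a₃ - a₁) = a₂ * (1 - c₁ * a₃) := by
          field_simp at h'
          linear_combination h'
        have hE2' : -(a₂ - a₁) = a₂ * (1 - c₁ * a₂) := by linear_combination E2
        have : (a₃ - a₂) * (1 - a₂ * c₁) = 0 := by linear_combination hE2' - h''
        have hne : 1 - a₂ * c₁ ≠ 0 := one_sub_ne _ _ h₂ hc₁abs
        exact h23 (by
          have := (mul_eq_zero.mp this).resolve_right hne
          linear_combination -this)
      · -- M a₃ = a₃ : both fixed, contradiction with |a₁| < 1
        rw [hMa₃] at h'
        have E3 : c₁ * a₃^2 - 2*a₃ + a₁ = 0 := by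
          field_simp at h'
          linear_combination h'
        have hd23 : a₂ - a₃ ≠ 0 := sub_ne_zero.mpr h23
        have hsum : c₁ * (a₂ + a₃) = 2 := by
          have : (a₂ - a₃) * (c₁ * (a₂ + a₃)) = (a₂ - a₃) * 2 := by
            linear_combination E2 - E3
          exact mul_left_cancel₀ hd23 this
        have hkey : a₁ * c₁ = 1 := by
          linear_combination (c₁/2) * hcond + ((1 - c₁*a₂)/2) * hsum + (c₁/2) * E2
        have : ((Complex.normSq a₁ : ℝ) : ℂ) = 1 := by
          rw [← Complex.mul_conj a₁]; exact hkey
        have h1 : Complex.normSq a₁ = 1 := by exact_mod_cast this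
        rw [← Complex.sq_norm] at h1
        nlinarith [norm_nonneg a₁]
    · -- M a₂ = a₃ : this is the conclusion
      rw [hMa₂] at h
      rw [← h]
      field_simp
      ring
  · -- converse
    intro ha₃ z hz
    have hzabs : ‖z‖ < 1 := by
      simpa [Metric.mem_ball, Complex.dist_eq] using hz
    have ha3 : a₃ * (1 - c₁ * a₂) = a₁ - a₂ := by
      rw [ha₃]; exact div_mul_cancel₀ _ f1
    have hc3 : c₃ * (1 - a₁ * c₂) = c₁ - c₂ := by
      have := congrArg (starRingEnd ℂ) ha3
      simpa [map_mul, map_sub, map_one, hc₁, hc₂, hc₃, Complex.conj_conj] using this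
    have d1 : 1 - c₁ * z ≠ 0 := one_sub_ne _ _ hc₁abs hzabs
    have d2 : 1 - c₂ * z ≠ 0 := one_sub_ne _ _ hc₂abs hzabs
    have d3 : 1 - c₃ * z ≠ 0 := one_sub_ne _ _ hc₃abs hzabs
    rw [hB (M z), hB z]
    exact key_identity a₁ a₂ a₃ c₁ c₂ c₃ z (M z) ha3 hc3 (hM z) d1 d2 d3 f1 f2 g1
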